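/- Let (A, m) be a Noetherian local domain, I_1, I_2, ... nonzero ideals, P = ∏_n A/I_n, S = ⊕_n A/I_n. If M is a finitely generated A-module such that Hom_A(M, A/I_n) ≅ A/I_n as A-modules for all n, then Hom_A(M, P/S) ≅ P/S as A-modules. -/

import Mathlib

/-- Membership in the direct-sum submodule is equivalent to finite support. -/
theorem memS_iff_finiteSupport {A : Type u} [CommRing A] (N : ℕ → Type u)
    [∀ n, AddCommGroup (N n)] [∀ n, Module A (N n)]
    (S : Submodule A (∀ n, N n))
    (hS : S = ⨆ n, LinearMap.range (LinearMap.single A N n)) (x : ∀ n, N n) :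
    x ∈ S ↔ {n : ℕ | x n ≠ 0}.Finite := by
  classical
  subst hS
  constructor
  · intro hx
    refine Submodule.iSup_induction (motive := fun z => {n : ℕ | z n ≠ 0}.Finite) _ hx ?_ ?_ ?_
    · rintro n _ ⟨y, rfl⟩
      refine (Set.finite_singleton n).subset ?_
      intro m hm
      simp only [Set.mem_setOf_eq] at hm
      by_contra hmn
      exact hm (Pi.single_eq_of_ne (by simpa using hmn) y)
    · simp
    · intro a b ha hb
      refine (ha.union hb).subset ?_
      intro n hn
      by_contra hc
      simp only [Set.mem_union, Set.mem_setOf_eq, not_or, not_not] at hc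
      simp only [Set.mem_setOf_eq, Pi.add_apply, hc.1, hc.2, add_zero] at hn
      exact hn rfl
  · intro hx
    have hrep : x = ∑ n ∈ hx.toFinset, Pi.single n (x n) := by
      funext m
      rw [Finset.sum_apply]
      by_cases hm : m ∈ hx.toFinset
      · rw [Finset.sum_eq_single m]
        · simp
        · intro n _ hn
          exact Pi.single_eq_of_ne (Ne.symm hn) _
        · intro h; exact absurd hm h
      · have hx0 : x m = 0 := by simpa using hm
        rw [hx0]
        refine (Finset.sum_eq_zero ?_).symm
        intro n hn
        refine Pi.single_eq_of_ne ?_ _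
        rintro rfl
        exact hm hn
    rw [hrep]
    apply Submodule.sum_mem
    intro n _
    exact Submodule.mem_iSup_of_mem n ⟨x n, rfl⟩

theorem hom_quotient_iso_of_hom_iso
    {A : Type u} [CommRing A] [IsDomain A] [IsNoetherianRing A] [IsLocalRing A]
    (I : ℕ → Ideal A) (hne : ∀ n, I n ≠ ⊥)
    (S : Submodule A ((n : ℕ) → A ⧸ I n))
    (hS : S = ⨆ n, LinearMap.range (LinearMap.single A (fun n => A ⧸ I n) n))
    (M : Type u) [AddCommGroup M] [Module A M] [Module.Finite A M]
    (hhom : ∀ n, Nonempty ((M →ₗ[A] A ⧸ I n) ≃ₗ[A] A ⧸ I n)) :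
    Nonempty ((M →ₗ[A] (((n : ℕ) → A ⧸ I n) ⧸ S)) ≃ₗ[A] (((n : ℕ) → A ⧸ I n) ⧸ S)) := by
  classical
  have hmemS : ∀ x : ((n : ℕ) → A ⧸ I n), x ∈ S ↔ {n : ℕ | x n ≠ 0}.Finite :=
    memS_iff_finiteSupport (fun n => A ⧸ I n) S hS
  -- the composition-with-quotient map
  set Φ : (M →ₗ[A] ((n : ℕ) → A ⧸ I n)) →ₗ[A] (M →ₗ[A] ((n : ℕ) → A ⧸ I n) ⧸ S) := LinearMap.llcomp A M ((n : ℕ) → A ⧸ I n) (((n : ℕ) → A ⧸ I n) ⧸ S) S.mkQ with hΦ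
  have hΦapp : ∀ (g : M →ₗ[A] ((n : ℕ) → A ⧸ I n)) (m : M), Φ g m = S.mkQ (g m) := fun g m => rfl
  -- Step 1 : Φ is surjective
  have hsurj : Function.Surjective Φ := by
    intro f
    obtain ⟨k, π, hπ⟩ := Module.Finite.exists_fin' A M
    obtain ⟨g', hg'⟩ := Module.projective_lifting_property S.mkQ (f ∘ₗ π)
      (Submodule.mkQ_surjective S)
    obtain ⟨T, hT⟩ : (LinearMap.ker π).FG := IsNoetherian.noetherian _
    have hTS : ∀ r ∈ T, {n : ℕ | g' r n ≠ 0}.Finite := by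
      intro r hr
      rw [← hmemS]
      rw [← Submodule.Quotient.mk_eq_zero, ← Submodule.mkQ_apply]
      have h1 : S.mkQ (g' r) = f (π r) := by
        rw [← LinearMap.comp_apply, hg']; rfl
      have h2 : r ∈ LinearMap.ker π := hT ▸ Submodule.subset_span hr
      rw [LinearMap.mem_ker] at h2
      rw [h1, h2, map_zero]
    set F : Set ℕ := ⋃ r ∈ (T : Set (Fin k → A)), {n : ℕ | g' r n ≠ 0} with hF
    have hFfin : F.Finite := Set.Finite.biUnion T.finite_toSet hTS
    set killF : ((n : ℕ) → A ⧸ I n) →ₗ[A] ((n : ℕ) → A ⧸ I n) :=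
      { toFun := fun x n => if n ∈ F then 0 else x n
        map_add' := by intro x y; funext n; by_cases h : n ∈ F <;> simp [h]
        map_smul' := by intro c x; funext n; by_cases h : n ∈ F <;> simp [h] } with hkillF
    have hkillFapp : ∀ (x : ((n : ℕ) → A ⧸ I n)) (n : ℕ), killF x n = if n ∈ F then 0 else x n :=
      fun x n => rfl
    have hker : LinearMap.ker π ≤ LinearMap.ker (killF ∘ₗ g') := by
      rw [← hT, Submodule.span_le]
      intro r hr
      simp only [SetLike.mem_coe, LinearMap.mem_ker, LinearMap.comp_apply]
      funext n
      by_cases h : n ∈ F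
      · simp [hkillFapp, h]
      · have h0 : g' r n = 0 := by
          by_contra h0
          exact h (Set.mem_biUnion hr h0)
        simp [hkillFapp, h, h0]
    set e : ((Fin k → A) ⧸ LinearMap.ker π) ≃ₗ[A] M := π.quotKerEquivOfSurjective hπ with he
    set h : M →ₗ[A] ((n : ℕ) → A ⧸ I n) :=
      ((LinearMap.ker π).liftQ (killF ∘ₗ g') hker) ∘ₗ (e.symm : M →ₗ[A] _) with hh
    refine ⟨h, ?_⟩
    ext m
    obtain ⟨x, rfl⟩ := hπ m
    have hesymm : e.symm (π x) = Submodule.Quotient.mk x := by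
      apply e.injective
      rw [LinearEquiv.apply_symm_apply]
      simp [he, LinearMap.quotKerEquivOfSurjective, LinearMap.quotKerEquivRange]
    have h1 : h (π x) = killF (g' x) := by
      simp only [hh, LinearMap.comp_apply, LinearEquiv.coe_coe, hesymm]
      rfl
    rw [hΦapp, h1]
    have hdiff : g' x - killF (g' x) ∈ S := by
      rw [hmemS]
      refine hFfin.subset ?_
      intro n hn
      simp only [Set.mem_setOf_eq, Pi.sub_apply] at hn
      by_contra hnF
      rw [hkillFapp] at hn
      simp [hnF] at hn
    have h2 : S.mkQ (killF (g' x)) = S.mkQ (g' x) := by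
      rw [eq_comm, Submodule.mkQ_apply, Submodule.mkQ_apply, Submodule.Quotient.eq]
      exact hdiff
    rw [h2]
    have h3 : S.mkQ (g' x) = f (π x) := by rw [← LinearMap.comp_apply, hg']; rfl
    rw [h3]
  -- Step 2 : Hom(M, P) ≃ P carrying ker Φ to S
  set σ : ∀ n, (M →ₗ[A] A ⧸ I n) ≃ₗ[A] A ⧸ I n := fun n => (hhom n).some with hσ
  set e1 : (M →ₗ[A] ((n : ℕ) → A ⧸ I n)) ≃ₗ[A] ((n : ℕ) → (M →ₗ[A] A ⧸ I n)) :=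
    { toFun := fun g n => (LinearMap.proj n).comp g
      map_add' := fun _ _ => rfl
      map_smul' := fun _ _ => rfl
      invFun := fun v => LinearMap.pi v
      left_inv := fun g => by ext m; rfl
      right_inv := fun v => by ext n m; rfl } with he1
  set e2 : (M →ₗ[A] ((n : ℕ) → A ⧸ I n)) ≃ₗ[A] ((n : ℕ) → A ⧸ I n) := e1.trans (LinearEquiv.piCongrRight σ) with he2
  have he2app : ∀ (g : M →ₗ[A] ((n : ℕ) → A ⧸ I n)) (n : ℕ), e2 g n = σ n ((LinearMap.proj n).comp g) :=
    fun g n => rfl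
  have hkerΦ : ∀ g : M →ₗ[A] ((n : ℕ) → A ⧸ I n), g ∈ LinearMap.ker Φ ↔ ∀ m, g m ∈ S := by
    intro g
    rw [LinearMap.mem_ker]
    constructor
    · intro hg m
      have : Φ g m = 0 := by rw [hg]; rfl
      rwa [hΦapp, Submodule.mkQ_apply, Submodule.Quotient.mk_eq_zero] at this
    · intro hg
      ext m
      rw [hΦapp, Submodule.mkQ_apply]
      simp only [LinearMap.zero_apply]
      rw [Submodule.Quotient.mk_eq_zero]
      exact hg m
  obtain ⟨Tg, hTg⟩ : (⊤ : Submodule A M).FG := Module.Finite.fg_top (R := A) (M := M)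
  have hkey : ∀ g : M →ₗ[A] ((n : ℕ) → A ⧸ I n), g ∈ LinearMap.ker Φ ↔ e2 g ∈ S := by
    intro g
    rw [hkerΦ, hmemS]
    constructor
    · intro hg
      have hTfin : (⋃ m ∈ (Tg : Set M), {n : ℕ | g m n ≠ 0}).Finite :=
        Set.Finite.biUnion Tg.finite_toSet (fun m _ => (hmemS (g m)).mp (hg m))
      refine hTfin.subset ?_
      intro n hn
      rw [Set.mem_setOf_eq, he2app] at hn
      have hproj : (LinearMap.proj n).comp g ≠ 0 := by
        intro h0
        rw [h0, map_zero] at hn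
        exact hn rfl
      have hex : ∃ m ∈ Tg, g m n ≠ 0 := by
        by_contra hc
        push_neg at hc
        apply hproj
        have hle : (⊤ : Submodule A M) ≤ LinearMap.ker ((LinearMap.proj n).comp g) := by
          rw [← hTg, Submodule.span_le]
          intro m hm
          simpa [LinearMap.mem_ker] using hc m hm
        ext m
        simpa using hle (Submodule.mem_top : m ∈ ⊤)
      obtain ⟨m, hm, hmn⟩ := hex
      exact Set.mem_biUnion hm hmn
    · intro hfin m
      rw [hmemS]
      refine hfin.subset ?_
      intro n hn
      rw [Set.mem_setOf_eq] at hn ⊢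
      intro h0
      apply hn
      have h1 : σ n ((LinearMap.proj n).comp g) = 0 := h0
      have hz : (LinearMap.proj n).comp g = 0 := by
        have := congrArg (σ n).symm h1
        simpa using this
      simpa using LinearMap.congr_fun hz m
  have hmap : (LinearMap.ker Φ).map (e2 : (M →ₗ[A] ((n : ℕ) → A ⧸ I n)) →ₗ[A] ((n : ℕ) → A ⧸ I n)) = S := by
    ext x
    simp only [Submodule.mem_map]
    constructor
    · rintro ⟨g, hg, rfl⟩
      exact (hkey g).mp hg
    · intro hx
      refine ⟨e2.symm x, (hkey _).mpr ?_, e2.apply_symm_apply x⟩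
      rwa [e2.apply_symm_apply]
  exact ⟨(Φ.quotKerEquivOfSurjective hsurj).symm.trans
    (Submodule.Quotient.equiv _ S e2 hmap)⟩
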